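/- Let u, w be real constants with u² + w² = 1 and suppose u·κ(s) − w·τ(s) > 0 for all s ∈ I. Define γ_V : I → ℝ³ by γ_V′(s) = u·T(s) + w·B(s). Then γ_V is a unit-speed curve whose Frenet apparatus is given by T_V = uT + wB, N_V = N, B_V = −wT + uB, with curvature κ_V = uκ − wτ and torsion τ_V = wκ + uτ; moreover κ = u·κ_V + w·τ_V and τ = −w·κ_V + u·τ_V. -/

import Mathlib

open scoped RealInnerProductSpace

noncomputable def cross3 (x y : EuclideanSpace ℝ (Fin 3)) : EuclideanSpace ℝ (Fin 3) :=
  WithLp.toLp 2 ![x 1 * y 2 - x 2 * y 1, x 2 * y 0 - x 0 * y 2, x 0 * y 1 - x 1 * y 0]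

/-- For constants u, w with u² + w² = 1 and uκ - wτ > 0, the integral
curve γ_V of V = uT + wB is unit speed with Frenet apparatus T_V = uT + wB, N_V = N,
B_V = -wT + uB, κ_V = uκ - wτ, τ_V = wκ + uτ; and κ = uκ_V + wτ_V, τ = -wκ_V + uτ_V. -/
lemma cross3_aux (T N B : EuclideanSpace ℝ (Fin 3)) (u w : ℝ)
    (hB : B = cross3 T N)
    (hdot : T 0 * N 0 + T 1 * N 1 + T 2 * N 2 = 0)
    (hnn : N 0 * N 0 + N 1 * N 1 + N 2 * N 2 = 1) :
    (-w) • T + u • B = cross3 (u • T + w • B) N := by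
  subst hB
  ext i
  fin_cases i <;>
    simp [cross3, PiLp.add_apply, PiLp.smul_apply, smul_eq_mul]
  · linear_combination (-(w * N 0)) * hdot + (w * T 0) * hnn
  · linear_combination (-(w * N 1)) * hdot + (w * T 1) * hnn
  · linear_combination (-(w * N 2)) * hdot + (w * T 2) * hnn

theorem stmt_8 (a b : ℝ) (γ T N B : ℝ → EuclideanSpace ℝ (Fin 3)) (κ τ : ℝ → ℝ)
    (hγT : ∀ s ∈ Set.Ioo a b, HasDerivAt γ (T s) s)
    (hT1 : ∀ s ∈ Set.Ioo a b, ‖T s‖ = 1)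
    (hN1 : ∀ s ∈ Set.Ioo a b, ‖N s‖ = 1)
    (hB1 : ∀ s ∈ Set.Ioo a b, ‖B s‖ = 1)
    (hTN : ∀ s ∈ Set.Ioo a b, ⟪T s, N s⟫ = 0)
    (hTB : ∀ s ∈ Set.Ioo a b, ⟪T s, B s⟫ = 0)
    (hNB : ∀ s ∈ Set.Ioo a b, ⟪N s, B s⟫ = 0)
    (horient : ∀ s ∈ Set.Ioo a b, B s = cross3 (T s) (N s))
    (hκpos : ∀ s ∈ Set.Ioo a b, 0 < κ s)
    (hTder : ∀ s ∈ Set.Ioo a b, HasDerivAt T (κ s • N s) s)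
    (hNder : ∀ s ∈ Set.Ioo a b, HasDerivAt N ((-κ s) • T s + τ s • B s) s)
    (hBder : ∀ s ∈ Set.Ioo a b, HasDerivAt B ((-τ s) • N s) s)
    (u w : ℝ) (huw : u ^ 2 + w ^ 2 = 1)
    (hκV : ∀ s ∈ Set.Ioo a b, 0 < u * κ s - w * τ s)
    (γV : ℝ → EuclideanSpace ℝ (Fin 3))
    (hγV : ∀ s ∈ Set.Ioo a b, HasDerivAt γV (u • T s + w • B s) s) :
    ∀ s ∈ Set.Ioo a b,
      ‖u • T s + w • B s‖ = 1 ∧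
      HasDerivAt (fun t => u • T t + w • B t) ((u * κ s - w * τ s) • N s) s ∧
      HasDerivAt N
        ((-(u * κ s - w * τ s)) • (u • T s + w • B s) +
          (w * κ s + u * τ s) • ((-w) • T s + u • B s)) s ∧
      HasDerivAt (fun t => (-w) • T t + u • B t) ((-(w * κ s + u * τ s)) • N s) s ∧
      (-w) • T s + u • B s = cross3 (u • T s + w • B s) (N s) ∧
      κ s = u * (u * κ s - w * τ s) + w * (w * κ s + u * τ s) ∧
      τ s = -w * (u * κ s - w * τ s) + u * (w * κ s + u * τ s) := by
  intro s hs
  have hTNs := hTN s hs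
  have hN1s := hN1 s hs
  have hT1s := hT1 s hs
  have hB1s := hB1 s hs
  have hTBs := hTB s hs
  have hBTs : ⟪B s, T s⟫ = 0 := by rw [real_inner_comm]; exact hTBs
  refine ⟨?_, ?_, ?_, ?_, ?_, ?_, ?_⟩
  · have h2 : ‖u • T s + w • B s‖ ^ 2 = 1 := by
      rw [← real_inner_self_eq_norm_sq]
      simp only [inner_add_left, inner_add_right, real_inner_smul_left, real_inner_smul_right]
      rw [real_inner_self_eq_norm_sq, real_inner_self_eq_norm_sq, hT1s, hB1s, hTBs, hBTs]
      ring_nf; linarith [huw]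
    nlinarith [norm_nonneg (u • T s + w • B s)]
  · have h : HasDerivAt (fun t => u • T t + w • B t) _ s := ((hTder s hs).const_smul u).add ((hBder s hs).const_smul w)
    convert h using 1
    match_scalars <;> ring
  · have h := hNder s hs
    convert h using 1
    match_scalars
    · linear_combination (-(κ s)) * huw
    · linear_combination (τ s) * huw
  · have h : HasDerivAt (fun t => (-w) • T t + u • B t) _ s := ((hTder s hs).const_smul (-w)).add ((hBder s hs).const_smul u)
    convert h using 1
    match_scalars <;> ring
  · have hdot : T s 0 * N s 0 + T s 1 * N s 1 + T s 2 * N s 2 = 0 := by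
      have h := hTNs
      simp [PiLp.inner_apply, Fin.sum_univ_three, RCLike.inner_apply, conj_trivial] at h
      linarith
    have hnn : N s 0 * N s 0 + N s 1 * N s 1 + N s 2 * N s 2 = 1 := by
      have h2 : ⟪N s, N s⟫ = 1 := by
        rw [real_inner_self_eq_norm_sq, hN1s]; norm_num
      simp only [PiLp.inner_apply, Fin.sum_univ_three, RCLike.inner_apply, conj_trivial] at h2
      linarith
    exact cross3_aux (T s) (N s) (B s) u w (horient s hs) hdot hnn
  · linear_combination (-(κ s)) * huw
  · linear_combination (-(τ s)) * huw
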